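/- Let h be the 5-dimensional real Lie algebra with Maurer–Cartan relations dθ^1=0, dθ^2=-θ^1∧θ^2, dθ^3=θ^1∧θ^3, dθ^4=2θ^1∧θ^4, dθ^5=θ^2∧θ^3 on the dual basis θ^1,...,θ^5. Then H^2_{-2θ^1}(h) is one-dimensional, spanned by the class of θ^1∧θ^4. -/

import Mathlib

open scoped BigOperators

/-- The space of real-valued `k`-cochains on `L` (as bare functions). -/
abbrev Cochain (L : Type*) (k : ℕ) := (Fin k → L) → ℝ

variable {L : Type*} [LieRing L] [LieAlgebra ℝ L]

/-- A cochain is an alternating multilinear map, i.e. an element of `Hom(Λ^k g, ℝ)`. -/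
def IsAltMap {k : ℕ} (θ : Cochain L k) : Prop :=
  ∃ f : AlternatingMap ℝ L ℝ (Fin k), ⇑f = θ

/-- The Chevalley–Eilenberg differential with trivial coefficients:
`(dθ)(X_0,…,X_k) = ∑_{p<q} (-1)^{p+q} θ([X_p,X_q],X_0,…,X̂_p,…,X̂_q,…,X_k)`. -/
def CEd : {k : ℕ} → Cochain L k → Cochain L (k + 1)
  | 0, _ => fun _ => 0
  | (k + 1), θ => fun X =>
      ∑ p : Fin (k + 2), ∑ q : Fin (k + 2),
        if h : (p : ℕ) < (q : ℕ) then
          ((-1 : ℝ) ^ ((p : ℕ) + (q : ℕ))) *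
            θ (Fin.cons ⁅X p, X q⁆
                (Fin.removeNth ⟨(p : ℕ), lt_of_lt_of_le h (Nat.lt_succ_iff.mp q.isLt)⟩
                  (Fin.removeNth q X)))
        else 0

/-- The wedge product `ω ∧ θ` of a 1-cochain with a `k`-cochain. -/
def oneWedge {k : ℕ} (ω : L → ℝ) (θ : Cochain L k) : Cochain L (k + 1) :=
  fun X => ∑ i : Fin (k + 1), ((-1 : ℝ) ^ (i : ℕ)) * ω (X i) * θ (Fin.removeNth i X)

/-- The deformed differential `d_{λω} θ = dθ + λ ω ∧ θ`. -/
def dDef {k : ℕ} (lam : ℝ) (ω : L → ℝ) (θ : Cochain L k) : Cochain L (k + 1) :=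
  CEd θ + lam • oneWedge ω θ

/-- The submodule of alternating multilinear `k`-cochains, i.e. `C^k(g,ℝ) = Hom(Λ^k g, ℝ)`. -/
def AltSub (L : Type*) [LieRing L] [LieAlgebra ℝ L] (k : ℕ) : Submodule ℝ (Cochain L k) where
  carrier := {θ | IsAltMap θ}
  add_mem' := by rintro θ₁ θ₂ ⟨f, rfl⟩ ⟨g, rfl⟩; exact ⟨f + g, rfl⟩
  zero_mem' := ⟨0, rfl⟩
  smul_mem' := by rintro c θ ⟨f, rfl⟩; exact ⟨c • f, rfl⟩

/-- The Chevalley–Eilenberg differential as a linear map. -/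
def CEdL (L : Type*) [LieRing L] [LieAlgebra ℝ L] (k : ℕ) :
    Cochain L k →ₗ[ℝ] Cochain L (k + 1) where
  toFun := CEd
  map_add' θ₁ θ₂ := by
    cases k with
    | zero => funext X; exact (zero_add (0:ℝ)).symm
    | succ k =>
      funext X
      show _ = CEd θ₁ X + CEd θ₂ X
      simp only [CEd, Pi.add_apply]
      rw [← Finset.sum_add_distrib]
      refine Finset.sum_congr rfl fun p _ => ?_
      rw [← Finset.sum_add_distrib]
      refine Finset.sum_congr rfl fun q _ => ?_
      split_ifs <;> simp [mul_add]
  map_smul' c θ := by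
    cases k with
    | zero => funext X; exact (smul_zero c).symm
    | succ k =>
      funext X
      show _ = c * CEd θ X
      simp only [CEd, Pi.smul_apply, smul_eq_mul]
      rw [Finset.mul_sum]
      refine Finset.sum_congr rfl fun p _ => ?_
      rw [Finset.mul_sum]
      refine Finset.sum_congr rfl fun q _ => ?_
      split_ifs with h
      · ring
      · exact (mul_zero c).symm

/-- The operator `θ ↦ ω ∧ θ` as a linear map. -/
def oneWedgeL (L : Type*) [LieRing L] [LieAlgebra ℝ L] (ω : L → ℝ) (k : ℕ) :
    Cochain L k →ₗ[ℝ] Cochain L (k + 1) where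
  toFun := oneWedge ω
  map_add' θ₁ θ₂ := by
    funext X
    simp [oneWedge, mul_add, Finset.sum_add_distrib]
  map_smul' c θ := by
    funext X
    simp only [oneWedge, Pi.smul_apply, smul_eq_mul, RingHom.id_apply]
    rw [Finset.mul_sum]
    exact Finset.sum_congr rfl fun i _ => by ring

/-- The deformed differential `d_{λω}` as a linear map. -/
noncomputable def dDefL (L : Type*) [LieRing L] [LieAlgebra ℝ L]
    (lam : ℝ) (ω : L → ℝ) (k : ℕ) : Cochain L k →ₗ[ℝ] Cochain L (k + 1) :=
  CEdL L k + lam • oneWedgeL L ω k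

/-- Deformed `k`-cocycles: alternating cochains with `d_{λω} θ = 0`. -/
noncomputable def Zdef (L : Type*) [LieRing L] [LieAlgebra ℝ L]
    (lam : ℝ) (ω : L → ℝ) (k : ℕ) : Submodule ℝ (Cochain L k) :=
  AltSub L k ⊓ LinearMap.ker (dDefL L lam ω k)

/-- Deformed `(k+1)`-coboundaries: images under `d_{λω}` of alternating `k`-cochains. -/
noncomputable def Bdef (L : Type*) [LieRing L] [LieAlgebra ℝ L]
    (lam : ℝ) (ω : L → ℝ) (k : ℕ) : Submodule ℝ (Cochain L (k + 1)) :=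
  Submodule.map (dDefL L lam ω k) (AltSub L k)

/-- The deformed cohomology `H^{k+1}_{λω}(g)` = closed forms modulo exact forms. -/
noncomputable abbrev Hdef (L : Type*) [LieRing L] [LieAlgebra ℝ L]
    (lam : ℝ) (ω : L → ℝ) (k : ℕ) :=
  Zdef L lam ω (k + 1) ⧸
    Submodule.comap (Zdef L lam ω (k + 1)).subtype (Bdef L lam ω k)

/-- The 1-cochain associated to a linear functional. -/
def c1 {L : Type*} (f : L → ℝ) : Cochain L 1 := fun X => f (X 0)

/-- The wedge product `f ∧ g` of two 1-forms, as a 2-cochain. -/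
def w2 {L : Type*} (f g : L → ℝ) : Cochain L 2 :=
  fun X => f (X 0) * g (X 1) - f (X 1) * g (X 0)

set_option linter.unusedSectionVars false
section Aux

variable {H : Type*} [LieRing H] [LieAlgebra ℝ H]

/-- Wedge of two linear functionals as an alternating 2-map. -/
def wA (f g : H →ₗ[ℝ] ℝ) : AlternatingMap ℝ H ℝ (Fin 2) where
  toFun X := f (X 0) * g (X 1) - f (X 1) * g (X 0)
  map_update_add' X i a b := by
    fin_cases i <;>
      simp [Function.update_apply, Fin.ext_iff, map_add] <;> ring
  map_update_smul' X i c a := by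
    fin_cases i <;>
      simp [Function.update_apply, Fin.ext_iff, map_smul, smul_eq_mul] <;> ring
  map_eq_zero_of_eq' X i j hX hij := by
    have h01 : X 0 = X 1 := by
      fin_cases i <;> fin_cases j <;> simp_all
    show f (X 0) * g (X 1) - f (X 1) * g (X 0) = 0
    rw [h01]; ring

@[simp] lemma wA_apply (f g : H →ₗ[ℝ] ℝ) (X : Fin 2 → H) :
    wA f g X = f (X 0) * g (X 1) - f (X 1) * g (X 0) := rfl

lemma eta2 (X : Fin 2 → H) : ![X 0, X 1] = X := by
  funext i; fin_cases i <;> rfl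

lemma eta3 (X : Fin 3 → H) : ![X 0, X 1, X 2] = X := by
  funext i; fin_cases i <;> rfl

lemma cEd1 (θ : Cochain H 1) (X : Fin 2 → H) :
    CEd θ X = -θ ![⁅X 0, X 1⁆] := by
  show (∑ p : Fin 2, ∑ q : Fin 2,
      if h : (p : ℕ) < (q : ℕ) then
        ((-1 : ℝ) ^ ((p : ℕ) + (q : ℕ))) *
          θ (Fin.cons ⁅X p, X q⁆
              (Fin.removeNth ⟨(p : ℕ), lt_of_lt_of_le h (Nat.lt_succ_iff.mp q.isLt)⟩
                (Fin.removeNth q X)))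
      else 0) = _
  rw [Fin.sum_univ_two, Fin.sum_univ_two]
  norm_num
  congr 1
  funext i
  fin_cases i
  rfl

lemma cEd2 (θ : Cochain H 2) (X : Fin 3 → H) :
    CEd θ X = -θ ![⁅X 0, X 1⁆, X 2] + θ ![⁅X 0, X 2⁆, X 1] - θ ![⁅X 1, X 2⁆, X 0] := by
  show (∑ p : Fin 3, ∑ q : Fin 3,
      if h : (p : ℕ) < (q : ℕ) then
        ((-1 : ℝ) ^ ((p : ℕ) + (q : ℕ))) *
          θ (Fin.cons ⁅X p, X q⁆
              (Fin.removeNth ⟨(p : ℕ), lt_of_lt_of_le h (Nat.lt_succ_iff.mp q.isLt)⟩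
                (Fin.removeNth q X)))
      else 0) = _
  rw [Fin.sum_univ_three, Fin.sum_univ_three, Fin.sum_univ_three, Fin.sum_univ_three]
  norm_num
  have h1 : (Fin.cons ⁅X 0, X 1⁆ (Fin.tail (Fin.removeNth 1 X)) : Fin 2 → H)
      = ![⁅X 0, X 1⁆, X 2] := by
    funext i; fin_cases i <;> rfl
  have h2 : (Fin.cons ⁅X 0, X 2⁆ (Fin.tail (Fin.removeNth 2 X)) : Fin 2 → H)
      = ![⁅X 0, X 2⁆, X 1] := by
    funext i; fin_cases i <;> rfl
  have h3 : (Fin.cons ⁅X 1, X 2⁆ (Fin.removeNth 1 (Fin.removeNth 2 X)) : Fin 2 → H)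
      = ![⁅X 1, X 2⁆, X 0] := by
    funext i; fin_cases i <;> rfl
  rw [h1, h2, h3]
  ring

lemma oneWedge1 (ω : H → ℝ) (θ : Cochain H 1) (X : Fin 2 → H) :
    oneWedge ω θ X = ω (X 0) * θ ![X 1] - ω (X 1) * θ ![X 0] := by
  show (∑ i : Fin 2, ((-1 : ℝ) ^ (i : ℕ)) * ω (X i) * θ (Fin.removeNth i X)) = _
  rw [Fin.sum_univ_two]
  have h0 : (Fin.removeNth 0 X : Fin 1 → H) = ![X 1] := by funext i; fin_cases i <;> rfl
  have h1 : (Fin.removeNth 1 X : Fin 1 → H) = ![X 0] := by funext i; fin_cases i <;> rfl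
  rw [h0, h1]; norm_num; ring

lemma oneWedge2 (ω : H → ℝ) (θ : Cochain H 2) (X : Fin 3 → H) :
    oneWedge ω θ X = ω (X 0) * θ ![X 1, X 2] - ω (X 1) * θ ![X 0, X 2]
      + ω (X 2) * θ ![X 0, X 1] := by
  show (∑ i : Fin 3, ((-1 : ℝ) ^ (i : ℕ)) * ω (X i) * θ (Fin.removeNth i X)) = _
  rw [Fin.sum_univ_three]
  have h0 : (Fin.removeNth 0 X : Fin 2 → H) = ![X 1, X 2] := by funext i; fin_cases i <;> rfl
  have h1 : (Fin.removeNth 1 X : Fin 2 → H) = ![X 0, X 2] := by funext i; fin_cases i <;> rfl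
  have h2 : (Fin.removeNth 2 X : Fin 2 → H) = ![X 0, X 1] := by funext i; fin_cases i <;> rfl
  rw [h0, h1, h2]; norm_num; ring

lemma dDefL1_apply (lam : ℝ) (ω : H → ℝ) (θ : Cochain H 1) (X : Fin 2 → H) :
    dDefL H lam ω 1 θ X =
      -θ ![⁅X 0, X 1⁆] + lam * (ω (X 0) * θ ![X 1] - ω (X 1) * θ ![X 0]) := by
  show CEd θ X + lam * oneWedge ω θ X = _
  rw [cEd1, oneWedge1]

lemma dDefL2_apply (lam : ℝ) (ω : H → ℝ) (θ : Cochain H 2) (X : Fin 3 → H) :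
    dDefL H lam ω 2 θ X =
      (-θ ![⁅X 0, X 1⁆, X 2] + θ ![⁅X 0, X 2⁆, X 1] - θ ![⁅X 1, X 2⁆, X 0])
      + lam * (ω (X 0) * θ ![X 1, X 2] - ω (X 1) * θ ![X 0, X 2]
        + ω (X 2) * θ ![X 0, X 1]) := by
  show CEd θ X + lam * oneWedge ω θ X = _
  rw [cEd2, oneWedge2]

end Aux
section Aux2
set_option linter.unusedSectionVars false
variable {H : Type*} [LieRing H] [LieAlgebra ℝ H]

lemma sum_fin2fun (g : Fin 5 → Fin 5 → ℝ) :
    (∑ r : Fin 2 → Fin 5, g (r 0) (r 1)) = ∑ i : Fin 5, ∑ j : Fin 5, g i j := by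
  calc ∑ r : Fin 2 → Fin 5, g (r 0) (r 1)
      = ∑ p : Fin 5 × Fin 5, g p.1 p.2 :=
        Fintype.sum_equiv (piFinTwoEquiv fun _ => Fin 5) _ _ (fun r => rfl)
    _ = ∑ i : Fin 5, ∑ j : Fin 5, g i j := Fintype.sum_prod_type _

lemma expand2 (E : Module.Basis (Fin 5) ℝ H) (f : AlternatingMap ℝ H ℝ (Fin 2)) (x y : H) :
    f ![x, y] = ∑ i : Fin 5, ∑ j : Fin 5,
      E.repr x i * E.repr y j * f ![E i, E j] := by
  have h1 : (![x, y] : Fin 2 → H) = fun k => ∑ j : Fin 5, E.repr (![x, y] k) j • E j := by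
    funext k; exact (E.sum_repr _).symm
  have e1 : f ![x, y] = ∑ r : Fin 2 → Fin 5,
      (f fun i => E.repr (![x, y] i) (r i) • E (r i)) := by
    conv_lhs => rw [h1]
    exact f.toMultilinearMap.map_sum (g := fun k j => E.repr (![x, y] k) j • E j)
  rw [e1, show (∑ i : Fin 5, ∑ j : Fin 5, E.repr x i * E.repr y j * f ![E i, E j])
      = ∑ r : Fin 2 → Fin 5, E.repr x (r 0) * E.repr y (r 1) * f ![E (r 0), E (r 1)] from
    (sum_fin2fun _).symm]
  refine Finset.sum_congr rfl fun r _ => ?_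
  have h3 : (fun k => E (r k)) = ![E (r 0), E (r 1)] := by funext k; fin_cases k <;> rfl
  calc (f fun i => E.repr (![x, y] i) (r i) • E (r i))
      = (∏ k : Fin 2, E.repr (![x, y] k) (r k)) • f ![E (r 0), E (r 1)] := by
        rw [← h3]; exact f.toMultilinearMap.map_smul_univ _ _
    _ = E.repr x (r 0) * E.repr y (r 1) * f ![E (r 0), E (r 1)] := by
        rw [Fin.prod_univ_two]
        simp only [Matrix.cons_val_zero, Matrix.cons_val_one, Matrix.head_cons, smul_eq_mul]

lemma f2smul0 (f : AlternatingMap ℝ H ℝ (Fin 2)) (c : ℝ) (x y : H) :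
    f ![c • x, y] = c * f ![x, y] := by
  have h : (![c • x, y] : Fin 2 → H) = Function.update ![x, y] 0 (c • x) := by
    funext k; fin_cases k <;> simp [Function.update_apply]
  have h2 : Function.update ![x, y] 0 x = ![x, y] := by
    funext k; fin_cases k <;> simp [Function.update_apply]
  rw [h, AlternatingMap.map_update_smul, h2, smul_eq_mul]

lemma f2neg0 (f : AlternatingMap ℝ H ℝ (Fin 2)) (x y : H) :
    f ![-x, y] = -f ![x, y] := by
  rw [show -x = (-1 : ℝ) • x by simp, f2smul0]; ring

lemma f2swap (f : AlternatingMap ℝ H ℝ (Fin 2)) (x y : H) :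
    f ![y, x] = -f ![x, y] := by
  have h : (![y, x] : Fin 2 → H) = ![x, y] ∘ Equiv.swap (0 : Fin 2) 1 := by
    funext k; fin_cases k <;> simp
  rw [h, AlternatingMap.map_swap _ _ (by decide)]

lemma f2zero (f : AlternatingMap ℝ H ℝ (Fin 2)) (x : H) : f ![x, x] = 0 :=
  f.map_eq_zero_of_eq ![x, x] (i := 0) (j := 1) rfl (by decide)

lemma f2z0 (f : AlternatingMap ℝ H ℝ (Fin 2)) (y : H) : f ![0, y] = 0 :=
  f.map_coord_zero 0 rfl

lemma f1smul (f : AlternatingMap ℝ H ℝ (Fin 1)) (c : ℝ) (x : H) :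
    f ![c • x] = c * f ![x] := by
  have h : (![c • x] : Fin 1 → H) = Function.update ![x] 0 (c • x) := by
    funext k; fin_cases k; simp [Function.update_apply]
  have h2 : Function.update ![x] 0 x = ![x] := by
    funext k; fin_cases k; simp [Function.update_apply]
  rw [h, AlternatingMap.map_update_smul, h2, smul_eq_mul]

end Aux2
set_option maxHeartbeats 2000000 in
set_option synthInstance.maxHeartbeats 400000 in
/-- `H^2_{-2θ^1}(h)` is one-dimensional, spanned by the class of
`θ^1 ∧ θ^4`. -/
theorem H2_deformed_neg_two
    (H : Type*) [LieRing H] [LieAlgebra ℝ H] (E : Module.Basis (Fin 5) ℝ H)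
    (b01 : ⁅E 0, E 1⁆ = E 1) (b02 : ⁅E 0, E 2⁆ = -E 2)
    (b03 : ⁅E 0, E 3⁆ = (-2 : ℝ) • E 3) (b12 : ⁅E 1, E 2⁆ = -E 4)
    (b04 : ⁅E 0, E 4⁆ = 0) (b13 : ⁅E 1, E 3⁆ = 0) (b14 : ⁅E 1, E 4⁆ = 0)
    (b23 : ⁅E 2, E 3⁆ = 0) (b24 : ⁅E 2, E 4⁆ = 0) (b34 : ⁅E 3, E 4⁆ = 0) :
    Module.finrank ℝ (Hdef H (-2) (fun v => E.repr v 0) 1) = 1 ∧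
    ∃ hm : w2 (fun v => E.repr v 0) (fun v => E.repr v 3) ∈
        Zdef H (-2) (fun v => E.repr v 0) 2,
      Submodule.span ℝ
        {(Submodule.Quotient.mk
            (⟨w2 (fun v => E.repr v 0) (fun v => E.repr v 3), hm⟩ :
              Zdef H (-2) (fun v => E.repr v 0) 2) :
          Hdef H (-2) (fun v => E.repr v 0) 1)} = ⊤ := by
  classical
  have b10 : ⁅E 1, E 0⁆ = -E 1 := by rw [← lie_skew, b01]
  have b20 : ⁅E 2, E 0⁆ = E 2 := by rw [← lie_skew, b02, neg_neg]
  have b30 : ⁅E 3, E 0⁆ = (2 : ℝ) • E 3 := by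
    rw [← lie_skew, b03, ← neg_smul]; norm_num
  have b21 : ⁅E 2, E 1⁆ = E 4 := by rw [← lie_skew, b12, neg_neg]
  have b40 : ⁅E 4, E 0⁆ = 0 := by rw [← lie_skew, b04, neg_zero]
  have b31 : ⁅E 3, E 1⁆ = 0 := by rw [← lie_skew, b13, neg_zero]
  have b41 : ⁅E 4, E 1⁆ = 0 := by rw [← lie_skew, b14, neg_zero]
  have b32 : ⁅E 3, E 2⁆ = 0 := by rw [← lie_skew, b23, neg_zero]
  have b42 : ⁅E 4, E 2⁆ = 0 := by rw [← lie_skew, b24, neg_zero]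
  have b43 : ⁅E 4, E 3⁆ = 0 := by rw [← lie_skew, b34, neg_zero]
  have rE : ∀ i j : Fin 5, E.repr (E i) j = if i = j then 1 else 0 := fun i j =>
    E.repr_self_apply i j
  have key : ∀ x y : H, ⁅x, y⁆ =
      (E.repr x 0 * E.repr y 1 - E.repr x 1 * E.repr y 0) • E 1
      + (E.repr x 2 * E.repr y 0 - E.repr x 0 * E.repr y 2) • E 2
      + (2 * (E.repr x 3 * E.repr y 0 - E.repr x 0 * E.repr y 3)) • E 3
      + (E.repr x 2 * E.repr y 1 - E.repr x 1 * E.repr y 2) • E 4 := by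
    intro x y
    conv_lhs => rw [← E.sum_repr x, ← E.sum_repr y]
    rw [Fin.sum_univ_five, Fin.sum_univ_five]
    simp only [add_lie, lie_add, smul_lie, lie_smul, lie_self, smul_zero, zero_add, add_zero,
      b01, b02, b03, b04, b12, b13, b14, b23, b24, b34, b10, b20, b30, b40, b21, b31, b41,
      b32, b42, b43]
    module
  have r0 : ∀ x y : H, E.repr ⁅x, y⁆ 0 = 0 := by
    intro x y; rw [key]
    simp [map_add, map_smul, Finsupp.add_apply, Finsupp.smul_apply, E.repr_self,
      Finsupp.single_apply]
  have r1 : ∀ x y : H, E.repr ⁅x, y⁆ 1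
      = E.repr x 0 * E.repr y 1 - E.repr x 1 * E.repr y 0 := by
    intro x y; rw [key]
    simp [map_add, map_smul, Finsupp.add_apply, Finsupp.smul_apply, E.repr_self,
      Finsupp.single_apply]
  have r2 : ∀ x y : H, E.repr ⁅x, y⁆ 2
      = E.repr x 2 * E.repr y 0 - E.repr x 0 * E.repr y 2 := by
    intro x y; rw [key]
    simp [map_add, map_smul, Finsupp.add_apply, Finsupp.smul_apply, E.repr_self,
      Finsupp.single_apply]
  have r3 : ∀ x y : H, E.repr ⁅x, y⁆ 3
      = 2 * (E.repr x 3 * E.repr y 0 - E.repr x 0 * E.repr y 3) := by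
    intro x y; rw [key]
    simp [map_add, map_smul, Finsupp.add_apply, Finsupp.smul_apply, E.repr_self,
      Finsupp.single_apply]
  have r4 : ∀ x y : H, E.repr ⁅x, y⁆ 4
      = E.repr x 2 * E.repr y 1 - E.repr x 1 * E.repr y 2 := by
    intro x y; rw [key]
    simp [map_add, map_smul, Finsupp.add_apply, Finsupp.smul_apply, E.repr_self,
      Finsupp.single_apply]
  have hwalt : IsAltMap (w2 (fun v => E.repr v 0) (fun v => E.repr v 3) : Cochain H 2) := by
    refine ⟨wA (E.coord 0) (E.coord 3), ?_⟩
    funext X; rfl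
  have hwker : dDefL H (-2) (fun v => E.repr v 0) 2
      (w2 (fun v => E.repr v 0) (fun v => E.repr v 3)) = 0 := by
    funext X
    rw [dDefL2_apply]
    simp only [w2, Matrix.cons_val_zero, Matrix.cons_val_one, Matrix.head_cons, r0, r3,
      Pi.zero_apply]
    ring
  have hm : w2 (fun v => E.repr v 0) (fun v => E.repr v 3)
      ∈ Zdef H (-2) (fun v => E.repr v 0) 2 :=
    Submodule.mem_inf.mpr ⟨hwalt, LinearMap.mem_ker.mpr hwker⟩
  set v : Hdef H (-2) (fun v => E.repr v 0) 1 :=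
    (Submodule.Quotient.mk
      (⟨w2 (fun v => E.repr v 0) (fun v => E.repr v 3), hm⟩ :
        Zdef H (-2) (fun v => E.repr v 0) 2)) with hv
  have hvne : v ≠ 0 := by
    intro h0
    rw [hv, Submodule.Quotient.mk_eq_zero] at h0
    have h0' : (w2 (fun v => E.repr v 0) (fun v => E.repr v 3) : Cochain H 2)
        ∈ Bdef H (-2) (fun v => E.repr v 0) 1 := h0
    obtain ⟨η, hηalt, hηeq⟩ := h0'
    obtain ⟨f1, hf1⟩ := hηalt
    have h := congrFun hηeq ![E 0, E 3]
    rw [dDefL1_apply] at h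
    simp only [Matrix.cons_val_zero, Matrix.cons_val_one, Matrix.head_cons] at h
    rw [b03, ← hf1, f1smul] at h
    simp [w2, rE, Finsupp.single_apply] at h
  have hspan : Submodule.span ℝ {v} = ⊤ := by
    rw [Submodule.eq_top_iff']
    intro q
    obtain ⟨⟨z, hz⟩, rfl⟩ := Submodule.Quotient.mk_surjective _ q
    obtain ⟨hzalt, hzker⟩ := Submodule.mem_inf.mp hz
    obtain ⟨f, hf⟩ := hzalt
    have hzk : dDefL H (-2) (fun v => E.repr v 0) 2 z = 0 := LinearMap.mem_ker.mp hzker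
    have con : ∀ i j k : Fin 5,
        (-z ![⁅E i, E j⁆, E k] + z ![⁅E i, E k⁆, E j] - z ![⁅E j, E k⁆, E i])
          + (-2) * (E.repr (E i) 0 * z ![E j, E k] - E.repr (E j) 0 * z ![E i, E k]
            + E.repr (E k) 0 * z ![E i, E j]) = 0 := by
      intro i j k
      have h := congrFun hzk ![E i, E j, E k]
      rw [dDefL2_apply] at h
      simpa using h
    have c13 : f ![E 1, E 3] = 0 := by
      have h := con 0 1 3
      rw [b01, b03, b13, ← hf, f2smul0, f2swap f (E 1) (E 3)] at h
      simp [rE, f2z0] at h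
      linarith
    have c14 : f ![E 1, E 4] = 0 := by
      have h := con 0 1 4
      rw [b01, b04, b14, ← hf] at h
      simp [rE, f2z0] at h
      linarith
    have c23 : f ![E 2, E 3] = 0 := by
      have h := con 0 2 3
      rw [b02, b03, b23, ← hf, f2neg0, f2smul0, f2swap f (E 2) (E 3)] at h
      simp [rE, f2z0] at h
      linarith
    have c24 : f ![E 2, E 4] = 0 := by
      have h := con 0 2 4
      rw [b02, b04, b24, ← hf, f2neg0] at h
      simp [rE, f2z0] at h
      linarith
    have c34 : f ![E 3, E 4] = 0 := by
      have h := con 1 2 3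
      rw [b12, b13, b23, ← hf, f2neg0, f2swap f (E 3) (E 4)] at h
      simp [rE, f2z0] at h
      linarith
    have c04 : f ![E 0, E 4] = -2 * f ![E 1, E 2] := by
      have h := con 0 1 2
      rw [b01, b02, b12, ← hf, f2neg0, f2neg0, f2swap f (E 1) (E 2),
        f2swap f (E 0) (E 4)] at h
      simp [rE] at h
      linarith
    have s10 := f2swap f (E 0) (E 1)
    have s20 := f2swap f (E 0) (E 2)
    have s30 := f2swap f (E 0) (E 3)
    have s40 := f2swap f (E 0) (E 4)
    have s21 := f2swap f (E 1) (E 2)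
    have s31 := f2swap f (E 1) (E 3)
    have s41 := f2swap f (E 1) (E 4)
    have s32 := f2swap f (E 2) (E 3)
    have s42 := f2swap f (E 2) (E 4)
    have s43 := f2swap f (E 3) (E 4)
    have hzX : ∀ X : Fin 2 → H, z X =
        f ![E 0, E 1] * (E.repr (X 0) 0 * E.repr (X 1) 1 - E.repr (X 0) 1 * E.repr (X 1) 0)
        + f ![E 0, E 2] * (E.repr (X 0) 0 * E.repr (X 1) 2 - E.repr (X 0) 2 * E.repr (X 1) 0)
        + f ![E 0, E 3] * (E.repr (X 0) 0 * E.repr (X 1) 3 - E.repr (X 0) 3 * E.repr (X 1) 0)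
        + f ![E 1, E 2] * ((E.repr (X 0) 1 * E.repr (X 1) 2 - E.repr (X 0) 2 * E.repr (X 1) 1)
            - 2 * (E.repr (X 0) 0 * E.repr (X 1) 4 - E.repr (X 0) 4 * E.repr (X 1) 0)) := by
      intro X
      conv_lhs => rw [← hf, ← eta2 X]
      rw [expand2 E f (X 0) (X 1)]
      simp only [Fin.sum_univ_five]
      simp only [f2zero, s10, s20, s30, s40, s21, s31, s41, s32, s42, s43,
        c13, c14, c23, c24, c34, c04]
      ring
    rw [Submodule.mem_span_singleton]
    use f ![E 0, E 3]
    rw [← sub_eq_zero, hv, ← Submodule.Quotient.mk_smul, ← Submodule.Quotient.mk_sub,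
      Submodule.Quotient.mk_eq_zero]
    show (f ![E 0, E 3] • w2 (fun v => E.repr v 0) (fun v => E.repr v 3) - z : Cochain H 2)
      ∈ Bdef H (-2) (fun v => E.repr v 0) 1
    refine ⟨c1 (fun x => (f ![E 0, E 1] / 3) * E.repr x 1 + f ![E 0, E 2] * E.repr x 2
        - f ![E 1, E 2] * E.repr x 4), ?_, ?_⟩
    · refine ⟨AlternatingMap.ofSubsingleton ℝ H ℝ 0
        ((f ![E 0, E 1] / 3) • E.coord 1 + f ![E 0, E 2] • E.coord 2
          - f ![E 1, E 2] • E.coord 4), ?_⟩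
      funext X
      simp [c1, Module.Basis.coord_apply]
    · funext X
      rw [dDefL1_apply]
      simp only [c1, Matrix.cons_val_zero, Matrix.cons_val_one, Matrix.head_cons,
        r1, r2, r4, Pi.sub_apply, Pi.smul_apply, smul_eq_mul]
      rw [hzX X]
      simp only [w2, Matrix.cons_val_zero, Matrix.cons_val_one, Matrix.head_cons]
      ring
  refine ⟨finrank_eq_one v hvne (fun q => Submodule.mem_span_singleton.mp ?_), hm, hspan⟩
  rw [hspan]; trivial
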